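/- arXiv:2109.09066 — 3 statements merged into one kernel-verified Lean document; each statement's English description precedes it below -/
import Mathlib

section
/- For all s, t ∈ [0,1] one has Ξ(s,t) ≤ Ξ(t,t). -/
open MeasureTheory Set Real

theorem stmt2
    (r0 α β γ δ : ℝ)
    (hr0 : 0 < r0) (hα : 0 ≤ α) (hβ : 0 ≤ β) (hγ : 0 ≤ γ) (hδ : 0 ≤ δ)
    (hαβ : 0 < α + β) (hγδ : 0 < γ + δ)
    (ϱ : ℝ)
    (hϱ : ϱ = r0 ^ 2 * (α * δ + β * γ) * Real.cosh r0
            + r0 * (α * γ + β * δ * r0 ^ 2) * Real.sinh r0)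
    (Ξ : ℝ → ℝ → ℝ)
    (hΞ : ∀ s t : ℝ, Ξ s t =
      (1 / ϱ) * (α * Real.sinh (r0 * min s t) + β * r0 * Real.cosh (r0 * min s t))
              * (γ * Real.sinh (r0 * (1 - max s t)) + δ * r0 * Real.cosh (r0 * (1 - max s t))))
    :
    ∀ s ∈ Set.Icc (0:ℝ) 1, ∀ t ∈ Set.Icc (0:ℝ) 1, Ξ s t ≤ Ξ t t := by
  have hsinh := Real.sinh_pos_iff.mpr hr0
  have hcosh := Real.cosh_pos (x := r0)
  have hρ : 0 < ϱ := by
    rw [hϱ]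
    have hsum : 0 < α * γ + α * δ + β * γ + β * δ := by nlinarith [mul_pos hαβ hγδ]
    have hA : 0 ≤ α * δ + β * γ := by positivity
    have hB : 0 ≤ α * γ + β * δ * r0 ^ 2 := by positivity
    have ht2 : 0 ≤ r0 * (α * γ + β * δ * r0 ^ 2) * Real.sinh r0 :=
      mul_nonneg (mul_nonneg hr0.le hB) hsinh.le
    have ht1 : 0 ≤ r0 ^ 2 * (α * δ + β * γ) * Real.cosh r0 :=
      mul_nonneg (mul_nonneg (by positivity) hA) hcosh.le
    rcases hA.lt_or_eq with h | h
    · have : 0 < r0 ^ 2 * (α * δ + β * γ) * Real.cosh r0 :=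
        mul_pos (mul_pos (by positivity) h) hcosh
      linarith
    · have hαδ : α * δ = 0 := by nlinarith [mul_nonneg hα hδ, mul_nonneg hβ hγ]
      have hβγ : β * γ = 0 := by nlinarith [mul_nonneg hα hδ, mul_nonneg hβ hγ]
      have hsum2 : 0 < α * γ + β * δ := by linarith
      have hB' : 0 < α * γ + β * δ * r0 ^ 2 := by
        rcases (mul_nonneg hα hγ).lt_or_eq with h2 | h2
        · nlinarith [mul_nonneg (mul_nonneg hβ hδ) (sq_nonneg r0)]
        · have : 0 < β * δ := by linarith
          nlinarith [mul_pos this (pow_pos hr0 2)]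
      have : 0 < r0 * (α * γ + β * δ * r0 ^ 2) * Real.sinh r0 :=
        mul_pos (mul_pos hr0 hB') hsinh
      linarith
  intro s hs t ht
  rw [hΞ s t, hΞ t t]
  have hm : min s t ≤ t := min_le_right s t
  have hm0 : 0 ≤ min s t := le_min hs.1 ht.1
  have hM : t ≤ max s t := le_max_right s t
  have hM1 : max s t ≤ 1 := max_le hs.2 ht.2
  simp only [min_self, max_self]
  have hu : α * Real.sinh (r0 * min s t) + β * r0 * Real.cosh (r0 * min s t)
      ≤ α * Real.sinh (r0 * t) + β * r0 * Real.cosh (r0 * t) := by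
    have hle : r0 * min s t ≤ r0 * t := mul_le_mul_of_nonneg_left hm hr0.le
    have h1 : Real.sinh (r0 * min s t) ≤ Real.sinh (r0 * t) :=
      Real.sinh_le_sinh.mpr hle
    have h2 : Real.cosh (r0 * min s t) ≤ Real.cosh (r0 * t) := by
      rw [Real.cosh_le_cosh, abs_of_nonneg (by positivity),
        abs_of_nonneg (mul_nonneg hr0.le ht.1)]
      exact hle
    exact add_le_add (mul_le_mul_of_nonneg_left h1 hα)
      (mul_le_mul_of_nonneg_left h2 (mul_nonneg hβ hr0.le))
  have hv : γ * Real.sinh (r0 * (1 - max s t)) + δ * r0 * Real.cosh (r0 * (1 - max s t))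
      ≤ γ * Real.sinh (r0 * (1 - t)) + δ * r0 * Real.cosh (r0 * (1 - t)) := by
    have hle : r0 * (1 - max s t) ≤ r0 * (1 - t) :=
      mul_le_mul_of_nonneg_left (by linarith) hr0.le
    have h1 : Real.sinh (r0 * (1 - max s t)) ≤ Real.sinh (r0 * (1 - t)) :=
      Real.sinh_le_sinh.mpr hle
    have h2 : Real.cosh (r0 * (1 - max s t)) ≤ Real.cosh (r0 * (1 - t)) := by
      rw [Real.cosh_le_cosh, abs_of_nonneg (mul_nonneg hr0.le (by linarith)),
        abs_of_nonneg (mul_nonneg hr0.le (by linarith [ht.2]))]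
      exact hle
    exact add_le_add (mul_le_mul_of_nonneg_left h1 hγ)
      (mul_le_mul_of_nonneg_left h2 (mul_nonneg hδ hr0.le))
  have hu0 : 0 ≤ α * Real.sinh (r0 * t) + β * r0 * Real.cosh (r0 * t) := by
    have := Real.sinh_nonneg_iff.mpr (mul_nonneg hr0.le ht.1 : (0:ℝ) ≤ r0 * t)
    have := (Real.cosh_pos (x := r0 * t)).le
    positivity
  have hv0 : 0 ≤ γ * Real.sinh (r0 * (1 - max s t)) + δ * r0 * Real.cosh (r0 * (1 - max s t)) := by
    have := Real.sinh_nonneg_iff.mpr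
      (mul_nonneg hr0.le (by linarith) : (0:ℝ) ≤ r0 * (1 - max s t))
    have := (Real.cosh_pos (x := r0 * (1 - max s t))).le
    positivity
  have h1ρ : 0 ≤ 1 / ϱ := by positivity
  exact mul_le_mul (mul_le_mul_of_nonneg_left hu h1ρ) hv hv0 (mul_nonneg h1ρ hu0)
end

section
/- Assume the function t ↦ Ξ(t,t)·ℓ(t) is integrable on (0,1). Then the operator ℵ : E → E is completely continuous: ℵ is continuous with respect to the sup norm, and the image under ℵ of every norm-bounded subset of E is relatively compact in C([0,1]). -/
open MeasureTheory Set Real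

noncomputable def nestedOp (Ξ : ℝ → ℝ → ℝ) (ℓ : ℝ → ℝ) :
    List (ℝ → ℝ) → (ℝ → ℝ) → ℝ → ℝ
  | [], u => u
  | g :: gs, u => fun s => ∫ t in (0:ℝ)..1, Ξ s t * ℓ t * g (nestedOp Ξ ℓ gs u t)

lemma lipSinh {R a b : ℝ} (hR : 0 ≤ R) (ha : |a| ≤ R) (hb : |b| ≤ R) :
    |Real.sinh a - Real.sinh b| ≤ Real.cosh R * |a - b| := by
  have h := (convex_Icc (-R) R).norm_image_sub_le_of_norm_hasDerivWithin_le
    (f := Real.sinh) (f' := Real.cosh) (C := Real.cosh R)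
    (fun x _ => (Real.hasDerivAt_sinh x).hasDerivWithinAt)
    (fun x hx => by
      rw [Real.norm_eq_abs, abs_of_pos (Real.cosh_pos x)]
      exact Real.cosh_le_cosh.2 (by rw [abs_of_nonneg hR]; exact abs_le.2 ⟨hx.1, hx.2⟩))
    (abs_le.1 hb) (abs_le.1 ha)
  simpa [Real.norm_eq_abs] using h

lemma lipCosh {R a b : ℝ} (hR : 0 ≤ R) (ha : |a| ≤ R) (hb : |b| ≤ R) :
    |Real.cosh a - Real.cosh b| ≤ Real.cosh R * |a - b| := by
  have h := (convex_Icc (-R) R).norm_image_sub_le_of_norm_hasDerivWithin_le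
    (f := Real.cosh) (f' := Real.sinh) (C := Real.cosh R)
    (fun x _ => (Real.hasDerivAt_cosh x).hasDerivWithinAt)
    (fun x hx => by
      rw [Real.norm_eq_abs, Real.abs_sinh]
      calc Real.sinh |x| ≤ Real.sinh R := Real.sinh_le_sinh.2 ((abs_le.2 ⟨hx.1, hx.2⟩).trans (le_abs_self R)) |>.trans (by rw [abs_of_nonneg hR])
        _ ≤ Real.cosh R := (Real.sinh_lt_cosh R).le)
    (abs_le.1 hb) (abs_le.1 ha)
  simpa [Real.norm_eq_abs] using h

lemma pqNonneg {r a b : ℝ} (hr : 0 < r) (ha : 0 ≤ a) (hb : 0 ≤ b) {x : ℝ} (hx : 0 ≤ x) :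
    0 ≤ a * Real.sinh (r * x) + b * r * Real.cosh (r * x) :=
  add_nonneg (mul_nonneg ha (Real.sinh_nonneg_iff.2 (mul_nonneg hr.le hx)))
    (mul_nonneg (mul_nonneg hb hr.le) (Real.cosh_pos _).le)

lemma pqMono {r a b : ℝ} (hr : 0 < r) (ha : 0 ≤ a) (hb : 0 ≤ b) {x y : ℝ}
    (hx : 0 ≤ x) (hxy : x ≤ y) :
    a * Real.sinh (r * x) + b * r * Real.cosh (r * x)
      ≤ a * Real.sinh (r * y) + b * r * Real.cosh (r * y) := by
  have h1 : Real.sinh (r * x) ≤ Real.sinh (r * y) :=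
    Real.sinh_le_sinh.2 (by nlinarith)
  have h2 : Real.cosh (r * x) ≤ Real.cosh (r * y) := by
    apply Real.cosh_le_cosh.2
    rw [abs_of_nonneg (by positivity), abs_of_nonneg (by nlinarith)]
    nlinarith
  have := mul_le_mul_of_nonneg_left h1 ha
  have := mul_le_mul_of_nonneg_left h2 (mul_nonneg hb hr.le)
  linarith

lemma pqPos {r a b : ℝ} (hr : 0 < r) (ha : 0 ≤ a) (hb : 0 ≤ b) (hab : 0 < a + b)
    {x : ℝ} (hx : 0 < x) :
    0 < a * Real.sinh (r * x) + b * r * Real.cosh (r * x) := by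
  rcases hb.eq_or_lt with hb0 | hb0
  · have ha0 : 0 < a := by linarith
    have h1 : 0 < Real.sinh (r * x) := Real.sinh_pos_iff.2 (by positivity)
    have h2 : b * r * Real.cosh (r * x) = 0 := by rw [← hb0]; ring
    have h3 := mul_pos ha0 h1
    linarith
  · have h1 : 0 ≤ a * Real.sinh (r * x) :=
      mul_nonneg ha (Real.sinh_nonneg_iff.2 (by positivity))
    have h2 := mul_pos (mul_pos hb0 hr) (Real.cosh_pos (r * x))
    linarith

lemma pqLip {r a b : ℝ} (hr : 0 < r) (ha : 0 ≤ a) (hb : 0 ≤ b) {x y : ℝ}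
    (hx : x ∈ Set.Icc (0:ℝ) 1) (hy : y ∈ Set.Icc (0:ℝ) 1) :
    |(a * Real.sinh (r * x) + b * r * Real.cosh (r * x))
      - (a * Real.sinh (r * y) + b * r * Real.cosh (r * y))|
      ≤ ((a + b * r) * (r * Real.cosh r)) * |x - y| := by
  have hax : |r * x| ≤ r := by
    rw [abs_of_nonneg (by nlinarith [hx.1])]; nlinarith [hx.2]
  have hay : |r * y| ≤ r := by
    rw [abs_of_nonneg (by nlinarith [hy.1])]; nlinarith [hy.2]
  have h1 := lipSinh hr.le hax hay
  have h2 := lipCosh hr.le hax hay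
  have hrr : |r * x - r * y| = r * |x - y| := by
    rw [← mul_sub, abs_mul, abs_of_pos hr]
  rw [hrr] at h1 h2
  calc |(a * Real.sinh (r * x) + b * r * Real.cosh (r * x))
      - (a * Real.sinh (r * y) + b * r * Real.cosh (r * y))|
      = |a * (Real.sinh (r * x) - Real.sinh (r * y))
          + b * r * (Real.cosh (r * x) - Real.cosh (r * y))| := by ring_nf
    _ ≤ |a * (Real.sinh (r * x) - Real.sinh (r * y))|
          + |b * r * (Real.cosh (r * x) - Real.cosh (r * y))| := abs_add_le _ _
    _ = a * |Real.sinh (r * x) - Real.sinh (r * y)|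
          + b * r * |Real.cosh (r * x) - Real.cosh (r * y)| := by
        rw [abs_mul, abs_mul, abs_of_nonneg ha, abs_of_nonneg (mul_nonneg hb hr.le)]
    _ ≤ a * (Real.cosh r * (r * |x - y|)) + b * r * (Real.cosh r * (r * |x - y|)) := by
        have := mul_le_mul_of_nonneg_left h1 ha
        have := mul_le_mul_of_nonneg_left h2 (mul_nonneg hb hr.le)
        linarith
    _ = ((a + b * r) * (r * Real.cosh r)) * |x - y| := by ring

lemma prodDiff {a a' b b' A B La Lb d : ℝ}
    (ha : |a - a'| ≤ La * d) (hb : |b - b'| ≤ Lb * d)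
    (haB : |a'| ≤ A) (hbB : |b| ≤ B) (hA : 0 ≤ A) (hB : 0 ≤ B) :
    |a * b - a' * b'| ≤ (La * B + A * Lb) * d := by
  have key : a * b - a' * b' = (a - a') * b + a' * (b - b') := by ring
  rw [key]
  have h1 : |(a - a') * b| ≤ La * d * B := by
    rw [abs_mul]
    exact mul_le_mul ha hbB (abs_nonneg _) ((abs_nonneg _).trans ha)
  have h2 : |a' * (b - b')| ≤ A * (Lb * d) := by
    rw [abs_mul]
    exact mul_le_mul haB hb (abs_nonneg _) hA
  calc |(a - a') * b + a' * (b - b')| ≤ |(a - a') * b| + |a' * (b - b')| := abs_add_le _ _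
    _ ≤ La * d * B + A * (Lb * d) := by linarith
    _ = (La * B + A * Lb) * d := by ring

set_option maxHeartbeats 1000000 in
theorem stmt5
    (r0 α β γ δ : ℝ)
    (hr0 : 0 < r0) (hα : 0 ≤ α) (hβ : 0 ≤ β) (hγ : 0 ≤ γ) (hδ : 0 ≤ δ)
    (hαβ : 0 < α + β) (hγδ : 0 < γ + δ)
    (ϱ : ℝ)
    (hϱ : ϱ = r0 ^ 2 * (α * δ + β * γ) * Real.cosh r0
            + r0 * (α * γ + β * δ * r0 ^ 2) * Real.sinh r0)
    (Ξ : ℝ → ℝ → ℝ)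
    (hΞ : ∀ s t : ℝ, Ξ s t =
      (1 / ϱ) * (α * Real.sinh (r0 * min s t) + β * r0 * Real.cosh (r0 * min s t))
              * (γ * Real.sinh (r0 * (1 - max s t)) + δ * r0 * Real.cosh (r0 * (1 - max s t))))
    (℘ : ℝ)
    (h℘ : ℘ = max (β * r0 / (α * Real.sinh r0 + β * r0 * Real.cosh r0))
                  (δ * r0 / (γ * Real.sinh r0 + δ * r0 * Real.cosh r0)))
    (N : ℕ) (hN : 2 < N) (n m : ℕ) [NeZero n] (hm : 1 ≤ m)
    (ℓi : Fin m → ℝ → ℝ)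
    (hℓmeas : ∀ i, Measurable ((Set.Ioc (0:ℝ) 1).restrict (ℓi i)))
    (hℓpos : ∀ i, ∀ s ∈ Set.Ioc (0:ℝ) 1, 0 < ℓi i s)
    (ℓ : ℝ → ℝ)
    (hℓ : ∀ s : ℝ, ℓ s = r0 ^ 2 / ((N : ℝ) - 2) ^ 2
            * s ^ ((2 * ((N : ℝ) - 1)) / (2 - (N : ℝ))) * ∏ i, ℓi i s)
    (g : Fin n → ℝ → ℝ)
    (hgcont : ∀ ι, Continuous (g ι))
    (hgnonneg : ∀ ι, ∀ u : ℝ, 0 ≤ u → 0 ≤ g ι u)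
    (hint : MeasureTheory.IntegrableOn (fun t => Ξ t t * ℓ t) (Set.Ioo (0:ℝ) 1)) :
    (∀ u₁ : ℝ → ℝ,
      (ContinuousOn u₁ (Set.Icc (0:ℝ) 1) ∧
      (∀ s ∈ Set.Icc (0:ℝ) 1, 0 ≤ u₁ s) ∧
      (∀ s ∈ Set.Icc (0:ℝ) 1, ℘ * sSup ((fun t => |u₁ t|) '' Set.Icc (0:ℝ) 1) ≤ u₁ s)) →
      ∀ ε > (0:ℝ), ∃ η > (0:ℝ), ∀ v₁ : ℝ → ℝ,
        (ContinuousOn v₁ (Set.Icc (0:ℝ) 1) ∧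
      (∀ s ∈ Set.Icc (0:ℝ) 1, 0 ≤ v₁ s) ∧
      (∀ s ∈ Set.Icc (0:ℝ) 1, ℘ * sSup ((fun t => |v₁ t|) '' Set.Icc (0:ℝ) 1) ≤ v₁ s)) →
        (∀ s ∈ Set.Icc (0:ℝ) 1, |u₁ s - v₁ s| ≤ η) →
        ∀ s ∈ Set.Icc (0:ℝ) 1,
          |nestedOp Ξ ℓ (List.ofFn g) u₁ s - nestedOp Ξ ℓ (List.ofFn g) v₁ s| ≤ ε) ∧
    (∀ M : ℝ, IsCompact (closure { f : C(↥(Set.Icc (0:ℝ) 1), ℝ) |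
        ∃ u₁ : ℝ → ℝ,
          (ContinuousOn u₁ (Set.Icc (0:ℝ) 1) ∧
      (∀ s ∈ Set.Icc (0:ℝ) 1, 0 ≤ u₁ s) ∧
      (∀ s ∈ Set.Icc (0:ℝ) 1, ℘ * sSup ((fun t => |u₁ t|) '' Set.Icc (0:ℝ) 1) ≤ u₁ s)) ∧
          (∀ s ∈ Set.Icc (0:ℝ) 1, |u₁ s| ≤ M) ∧
          ∀ s : ↥(Set.Icc (0:ℝ) 1), f s = nestedOp Ξ ℓ (List.ofFn g) u₁ (s : ℝ) })) := by
  classical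
  have hsinh0 : 0 < Real.sinh r0 := Real.sinh_pos_iff.2 hr0
  have hcosh0 : 0 < Real.cosh r0 := Real.cosh_pos r0
  have hϱpos : 0 < ϱ := by
    have hcases : 0 < α * δ + β * γ ∨ 0 < α * γ + β * δ * r0 ^ 2 := by
      rcases hα.eq_or_lt with h1 | h1
      · have hb : 0 < β := by linarith
        rcases hγ.eq_or_lt with h2 | h2
        · have hd : 0 < δ := by linarith
          right
          have h3 : 0 < β * δ * r0 ^ 2 := by positivity
          nlinarith
        · left
          have h3 := mul_pos hb h2
          nlinarith [mul_nonneg hα hδ]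
      · rcases hδ.eq_or_lt with h2 | h2
        · have hg : 0 < γ := by linarith
          right
          have h3 := mul_pos h1 hg
          nlinarith [mul_nonneg (mul_nonneg hβ hδ) (sq_nonneg r0)]
        · left
          nlinarith [mul_pos h1 h2, mul_nonneg hβ hγ]
    rcases hcases with h | h
    · rw [hϱ]
      have t1 : 0 < r0 ^ 2 * (α * δ + β * γ) * Real.cosh r0 :=
        mul_pos (mul_pos (pow_pos hr0 2) h) hcosh0
      have t2 : 0 ≤ r0 * (α * γ + β * δ * r0 ^ 2) * Real.sinh r0 :=
        mul_nonneg (mul_nonneg hr0.le (by positivity)) hsinh0.le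
      linarith
    · rw [hϱ]
      have t1 : 0 ≤ r0 ^ 2 * (α * δ + β * γ) * Real.cosh r0 :=
        mul_nonneg (mul_nonneg (by positivity) (by positivity)) hcosh0.le
      have t2 : 0 < r0 * (α * γ + β * δ * r0 ^ 2) * Real.sinh r0 :=
        mul_pos (mul_pos hr0 h) hsinh0
      linarith
  have h1ϱ : 0 < 1 / ϱ := by positivity
  -- the two factor functions
  set P : ℝ → ℝ := fun x => α * Real.sinh (r0 * x) + β * r0 * Real.cosh (r0 * x) with hPdef
  set Q : ℝ → ℝ := fun x => γ * Real.sinh (r0 * x) + δ * r0 * Real.cosh (r0 * x) with hQdef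
  have hΞ' : ∀ s t : ℝ, Ξ s t = 1 / ϱ * P (min s t) * Q (1 - max s t) := by
    intro s t; rw [hΞ s t, hPdef, hQdef]
  have hPnn : ∀ x : ℝ, 0 ≤ x → 0 ≤ P x := by
    intro x hx; rw [hPdef]; exact pqNonneg hr0 hα hβ hx
  have hQnn : ∀ x : ℝ, 0 ≤ x → 0 ≤ Q x := by
    intro x hx; rw [hQdef]; exact pqNonneg hr0 hγ hδ hx
  have hPmono : ∀ x y : ℝ, 0 ≤ x → x ≤ y → P x ≤ P y := by
    intro x y hx hxy; rw [hPdef]; exact pqMono hr0 hα hβ hx hxy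
  have hQmono : ∀ x y : ℝ, 0 ≤ x → x ≤ y → Q x ≤ Q y := by
    intro x y hx hxy; rw [hQdef]; exact pqMono hr0 hγ hδ hx hxy
  have hPpos : ∀ x : ℝ, 0 < x → 0 < P x := by
    intro x hx; rw [hPdef]; exact pqPos hr0 hα hβ hαβ hx
  have hQpos : ∀ x : ℝ, 0 < x → 0 < Q x := by
    intro x hx; rw [hQdef]; exact pqPos hr0 hγ hδ hγδ hx
  set Lp : ℝ := (α + β * r0) * (r0 * Real.cosh r0) with hLpdef
  set Lq : ℝ := (γ + δ * r0) * (r0 * Real.cosh r0) with hLqdef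
  have hLp0 : 0 ≤ Lp := by rw [hLpdef]; positivity
  have hLq0 : 0 ≤ Lq := by rw [hLqdef]; positivity
  have hPlip : ∀ x ∈ Icc (0:ℝ) 1, ∀ y ∈ Icc (0:ℝ) 1, |P x - P y| ≤ Lp * |x - y| := by
    intro x hx y hy; rw [hPdef, hLpdef]; exact pqLip hr0 hα hβ hx hy
  have hQlip : ∀ x ∈ Icc (0:ℝ) 1, ∀ y ∈ Icc (0:ℝ) 1, |Q x - Q y| ≤ Lq * |x - y| := by
    intro x hx y hy; rw [hQdef, hLqdef]; exact pqLip hr0 hγ hδ hx hy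
  have hP1 : 0 ≤ P 1 := hPnn 1 zero_le_one
  have hQ1 : 0 ≤ Q 1 := hQnn 1 zero_le_one
  set L : ℝ := 1 / ϱ * (Lp * Q 1 + P 1 * Lq) with hLdef
  have hL0 : 0 ≤ L := by
    rw [hLdef]
    exact mul_nonneg h1ϱ.le (add_nonneg (mul_nonneg hLp0 hQ1) (mul_nonneg hP1 hLq0))
  -- membership facts
  have hminmem : ∀ {s t : ℝ}, s ∈ Icc (0:ℝ) 1 → t ∈ Icc (0:ℝ) 1 → min s t ∈ Icc (0:ℝ) 1 :=
    fun hs ht => ⟨le_min hs.1 ht.1, (min_le_left _ _).trans hs.2⟩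
  have hmaxmem : ∀ {s t : ℝ}, s ∈ Icc (0:ℝ) 1 → t ∈ Icc (0:ℝ) 1 → (1 - max s t) ∈ Icc (0:ℝ) 1 := by
    intro s t hs ht
    constructor
    · exact sub_nonneg.2 (max_le hs.2 ht.2)
    · have h1 : (0:ℝ) ≤ max s t := le_trans hs.1 (le_max_left s t)
      linarith
  -- Ξ basic facts
  have hΞnn : ∀ s ∈ Icc (0:ℝ) 1, ∀ t ∈ Icc (0:ℝ) 1, 0 ≤ Ξ s t := by
    intro s hs t ht
    rw [hΞ']
    exact mul_nonneg (mul_nonneg h1ϱ.le (hPnn _ (hminmem hs ht).1)) (hQnn _ (hmaxmem hs ht).1)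
  have hΞdiag : ∀ s ∈ Icc (0:ℝ) 1, ∀ t ∈ Icc (0:ℝ) 1, Ξ s t ≤ Ξ t t := by
    intro s hs t ht
    rw [hΞ' s t, hΞ' t t, min_self, max_self]
    have h1 : P (min s t) ≤ P t := hPmono _ _ (hminmem hs ht).1 (min_le_right s t)
    have h2 : Q (1 - max s t) ≤ Q (1 - t) :=
      hQmono _ _ (hmaxmem hs ht).1 (by linarith [le_max_right s t])
    have h3 : 0 ≤ Q (1 - max s t) := hQnn _ (hmaxmem hs ht).1
    have h4 : 0 ≤ P t := hPnn _ ht.1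
    calc 1 / ϱ * P (min s t) * Q (1 - max s t)
        ≤ 1 / ϱ * P t * Q (1 - max s t) :=
          mul_le_mul_of_nonneg_right (mul_le_mul_of_nonneg_left h1 h1ϱ.le) h3
      _ ≤ 1 / ϱ * P t * Q (1 - t) :=
          mul_le_mul_of_nonneg_left h2 (mul_nonneg h1ϱ.le h4)
  have hΞlip : ∀ s ∈ Icc (0:ℝ) 1, ∀ s' ∈ Icc (0:ℝ) 1, ∀ t ∈ Icc (0:ℝ) 1,
      |Ξ s t - Ξ s' t| ≤ L * |s - s'| := by
    intro s hs s' hs' t ht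
    rw [hΞ' s t, hΞ' s' t]
    have hd1 : |min s t - min s' t| ≤ |s - s'| :=
      (abs_min_sub_min_le_max s t s' t).trans
        (by rw [sub_self, abs_zero, max_eq_left (abs_nonneg _)])
    have hd2 : |(1 - max s t) - (1 - max s' t)| ≤ |s - s'| := by
      have h := (abs_max_sub_max_le_max s t s' t).trans
        (by rw [sub_self, abs_zero, max_eq_left (abs_nonneg _)] : max |s - s'| |t - t| ≤ |s - s'|)
      calc |(1 - max s t) - (1 - max s' t)| = |max s t - max s' t| := by
            rw [show (1 - max s t) - (1 - max s' t) = -(max s t - max s' t) by ring, abs_neg]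
        _ ≤ |s - s'| := h
    have hp_d : |P (min s t) - P (min s' t)| ≤ Lp * |s - s'| :=
      (hPlip _ (hminmem hs ht) _ (hminmem hs' ht)).trans
        (mul_le_mul_of_nonneg_left hd1 hLp0)
    have hq_d : |Q (1 - max s t) - Q (1 - max s' t)| ≤ Lq * |s - s'| :=
      (hQlip _ (hmaxmem hs ht) _ (hmaxmem hs' ht)).trans
        (mul_le_mul_of_nonneg_left hd2 hLq0)
    have hp_b : |P (min s' t)| ≤ P 1 := by
      rw [abs_of_nonneg (hPnn _ (hminmem hs' ht).1)]
      exact hPmono _ _ (hminmem hs' ht).1 (hminmem hs' ht).2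
    have hq_b : |Q (1 - max s t)| ≤ Q 1 := by
      rw [abs_of_nonneg (hQnn _ (hmaxmem hs ht).1)]
      exact hQmono _ _ (hmaxmem hs ht).1 (hmaxmem hs ht).2
    have key := prodDiff hp_d hq_d hp_b hq_b hP1 hQ1
    have hsplit : 1 / ϱ * P (min s t) * Q (1 - max s t) - 1 / ϱ * P (min s' t) * Q (1 - max s' t)
        = 1 / ϱ * (P (min s t) * Q (1 - max s t) - P (min s' t) * Q (1 - max s' t)) := by ring
    rw [hsplit, abs_mul, abs_of_pos h1ϱ]
    calc 1 / ϱ * |P (min s t) * Q (1 - max s t) - P (min s' t) * Q (1 - max s' t)|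
        ≤ 1 / ϱ * ((Lp * Q 1 + P 1 * Lq) * |s - s'|) := mul_le_mul_of_nonneg_left key h1ϱ.le
      _ = L * |s - s'| := by rw [hLdef]; ring
  -- facts about ℓ
  have hN2 : (0:ℝ) < (N:ℝ) - 2 := by
    have : (2:ℝ) < (N:ℝ) := by exact_mod_cast hN
    linarith
  have hℓnn : ∀ t ∈ Ioc (0:ℝ) 1, 0 ≤ ℓ t := by
    intro t ht; rw [hℓ]
    have h1 : (0:ℝ) < t ^ ((2 * ((N : ℝ) - 1)) / (2 - (N : ℝ))) := Real.rpow_pos_of_pos ht.1 _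
    have h2 : 0 < ∏ i, ℓi i t := Finset.prod_pos fun i _ => hℓpos i t ht
    have h0 : (0:ℝ) < r0 ^ 2 / ((N : ℝ) - 2) ^ 2 := by positivity
    positivity
  have hℓmeas2 : AEMeasurable ℓ (volume.restrict (Ioc (0:ℝ) 1)) := by
    rw [aemeasurable_restrict_iff_comap_subtype measurableSet_Ioc]
    have heq : (ℓ ∘ ((↑) : (Ioc (0:ℝ) 1) → ℝ)) = fun x : (Ioc (0:ℝ) 1) =>
        r0 ^ 2 / ((N : ℝ) - 2) ^ 2
          * Real.exp (Real.log (x:ℝ) * ((2 * ((N : ℝ) - 1)) / (2 - (N : ℝ))))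
          * ∏ i, ℓi i (x:ℝ) := by
      funext x
      simp only [Function.comp_apply, hℓ]
      rw [Real.rpow_def_of_pos x.2.1]
    rw [heq]
    refine Measurable.aemeasurable (Measurable.mul (Measurable.mul measurable_const ?_) ?_)
    · exact ((Real.measurable_log.comp measurable_subtype_coe).mul_const _).exp
    · exact Finset.measurable_prod _ fun i _ => hℓmeas i
  have hℓsm : AEStronglyMeasurable ℓ (volume.restrict (Ioc (0:ℝ) 1)) :=
    hℓmeas2.aestronglyMeasurable
  have hintc : IntegrableOn (fun t => Ξ t t * ℓ t) (Ioc (0:ℝ) 1) volume :=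
    hint.congr_set_ae (MeasureTheory.Ioo_ae_eq_Ioc (a := (0:ℝ)) (b := 1)).symm
  set K0 : ℝ := ∫ t in Ioc (0:ℝ) 1, Ξ t t * ℓ t with hK0def
  have hK0 : 0 ≤ K0 := by
    rw [hK0def]
    exact setIntegral_nonneg measurableSet_Ioc fun t ht =>
      mul_nonneg (hΞnn t (Ioc_subset_Icc_self ht) t (Ioc_subset_Icc_self ht)) (hℓnn t ht)
  have hΞc : ∀ s : ℝ, Continuous fun t => Ξ s t := by
    intro s
    have hPc : Continuous P := by rw [hPdef]; fun_prop
    have hQc : Continuous Q := by rw [hQdef]; fun_prop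
    have : (fun t => Ξ s t) = fun t => 1 / ϱ * P (min s t) * Q (1 - max s t) :=
      funext fun t => hΞ' s t
    rw [this]
    exact (continuous_const.mul (hPc.comp (continuous_const.min continuous_id))).mul
      (hQc.comp (continuous_const.sub (continuous_const.max continuous_id)))
  -- pointwise bound for the integrand
  have Hbd : ∀ (h : ℝ → ℝ) (C : ℝ), (∀ t ∈ Ioc (0:ℝ) 1, |h t| ≤ C) → ∀ s ∈ Icc (0:ℝ) 1,
      ∀ t ∈ Ioc (0:ℝ) 1, ‖Ξ s t * ℓ t * h t‖ ≤ Ξ t t * ℓ t * C := by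
    intro h C hC s hs t ht
    have htI := Ioc_subset_Icc_self ht
    rw [Real.norm_eq_abs, abs_mul, abs_mul, abs_of_nonneg (hΞnn s hs t htI),
      abs_of_nonneg (hℓnn t ht)]
    have h1 : Ξ s t * ℓ t ≤ Ξ t t * ℓ t :=
      mul_le_mul_of_nonneg_right (hΞdiag s hs t htI) (hℓnn t ht)
    exact mul_le_mul h1 (hC t ht) (abs_nonneg _)
      (mul_nonneg (hΞnn t htI t htI) (hℓnn t ht))
  -- integrability of the integrand
  have HInt : ∀ h : ℝ → ℝ, AEStronglyMeasurable h (volume.restrict (Ioc (0:ℝ) 1)) →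
      ∀ C : ℝ, (∀ t ∈ Ioc (0:ℝ) 1, |h t| ≤ C) →
      ∀ s ∈ Icc (0:ℝ) 1, IntegrableOn (fun t => Ξ s t * ℓ t * h t) (Ioc (0:ℝ) 1) volume := by
    intro h hm C hC s hs
    refine Integrable.mono' (g := fun t => Ξ t t * ℓ t * C) (hintc.mul_const C)
      (((hΞc s).aestronglyMeasurable.mul hℓsm).mul hm) ?_
    rw [ae_restrict_iff' measurableSet_Ioc]
    exact ae_of_all _ fun t ht => Hbd h C hC s hs t ht
  -- basic estimate
  have HEst : ∀ h : ℝ → ℝ, AEStronglyMeasurable h (volume.restrict (Ioc (0:ℝ) 1)) →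
      ∀ C : ℝ, (∀ t ∈ Ioc (0:ℝ) 1, |h t| ≤ C) → ∀ s ∈ Icc (0:ℝ) 1,
      |∫ t in Ioc (0:ℝ) 1, Ξ s t * ℓ t * h t| ≤ C * K0 := by
    intro h hm C hC s hs
    have hb := MeasureTheory.norm_integral_le_of_norm_le (hintc.mul_const C)
      (by rw [ae_restrict_iff' measurableSet_Ioc]
          exact ae_of_all _ fun t ht => Hbd h C hC s hs t ht)
    rw [Real.norm_eq_abs] at hb
    calc |∫ t in Ioc (0:ℝ) 1, Ξ s t * ℓ t * h t|
        ≤ ∫ t in Ioc (0:ℝ) 1, Ξ t t * ℓ t * C := hb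
      _ = K0 * C := by rw [hK0def, ← integral_mul_const]
      _ = C * K0 := mul_comm _ _
  -- equicontinuity of the integral operator
  have HEqc : ∀ C : ℝ, 0 ≤ C → ∀ ε : ℝ, 0 < ε → ∃ θ : ℝ, 0 < θ ∧
      ∀ s ∈ Icc (0:ℝ) 1, ∀ s' ∈ Icc (0:ℝ) 1, |s - s'| ≤ θ →
      ∀ h : ℝ → ℝ, AEStronglyMeasurable h (volume.restrict (Ioc (0:ℝ) 1)) →
      (∀ t ∈ Ioc (0:ℝ) 1, |h t| ≤ C) →
      |(∫ t in Ioc (0:ℝ) 1, Ξ s t * ℓ t * h t) - ∫ t in Ioc (0:ℝ) 1, Ξ s' t * ℓ t * h t| ≤ ε := by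
    intro C hC ε hε
    set ε1 : ℝ := ε / (4 * (C + 1)) with hε1def
    have hε1 : 0 < ε1 := by rw [hε1def]; apply div_pos hε; linarith
    set F : ℕ → Set ℝ := fun k => Ioc (1 / ((k:ℝ) + 2)) (1 - 1 / ((k:ℝ) + 2)) with hFdef
    have hFmeas : ∀ k, MeasurableSet (F k) := fun k => measurableSet_Ioc
    have hFmono : Monotone F := by
      intro i j hij
      rw [hFdef]
      have hi : (0:ℝ) < (i:ℝ) + 2 := by positivity
      have hij' : (i:ℝ) + 2 ≤ (j:ℝ) + 2 := by
        have : (i:ℝ) ≤ (j:ℝ) := Nat.cast_le.2 hij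
        linarith
      have hle : 1 / ((j:ℝ) + 2) ≤ 1 / ((i:ℝ) + 2) := one_div_le_one_div_of_le hi hij'
      exact Ioc_subset_Ioc hle (by linarith)
    have hFU : ⋃ k, F k = Ioo (0:ℝ) 1 := by
      apply subset_antisymm
      · refine iUnion_subset fun k => ?_
        intro x hx
        have h1 : (0:ℝ) < 1 / ((k:ℝ) + 2) := by positivity
        exact ⟨lt_trans h1 hx.1, by linarith [hx.2]⟩
      · intro x hx
        obtain ⟨k, hk⟩ := exists_nat_gt (max (1/x) (1/(1-x)))
        have hx1 : 0 < x := hx.1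
        have hx2 : 0 < 1 - x := by linarith [hx.2]
        have hk1 : 1/x < (k:ℝ) + 2 := by
          have := le_max_left (1/x) (1/(1-x)); linarith
        have hk2 : 1/(1-x) < (k:ℝ) + 2 := by
          have := le_max_right (1/x) (1/(1-x)); linarith
        refine mem_iUnion.2 ⟨k, ?_, ?_⟩
        · rw [div_lt_iff₀ (by positivity)]
          rw [div_lt_iff₀ hx1] at hk1
          rw [mul_comm]; exact hk1
        · have h2 : 1/((k:ℝ)+2) < 1 - x := by
            rw [div_lt_iff₀ (by positivity)]
            rw [div_lt_iff₀ hx2] at hk2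
            rw [mul_comm]; exact hk2
          linarith
    have htend := tendsto_setIntegral_of_monotone (μ := volume) (f := fun t => Ξ t t * ℓ t)
      hFmeas hFmono (by rw [hFU]; exact hint)
    rw [hFU] at htend
    obtain ⟨k, hk⟩ : ∃ k : ℕ,
        |(∫ t in F k, Ξ t t * ℓ t) - ∫ t in Ioo (0:ℝ) 1, Ξ t t * ℓ t| < ε1 := by
      obtain ⟨K, hK⟩ := Metric.tendsto_atTop.1 htend ε1 hε1
      exact ⟨K, by have := hK K le_rfl; rwa [Real.dist_eq] at this⟩
    set a : ℝ := 1 / ((k:ℝ) + 2) with hadef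
    set b : ℝ := 1 - a with hbdef
    have ha0 : 0 < a := by rw [hadef]; positivity
    have ha2 : a ≤ 1/2 := by
      rw [hadef]
      apply one_div_le_one_div_of_le (by norm_num)
      have : (0:ℝ) ≤ (k:ℝ) := Nat.cast_nonneg k
      linarith
    have hab : a ≤ b := by rw [hbdef]; linarith
    have hb1 : b < 1 := by rw [hbdef]; linarith
    have hb0 : 0 < b := by rw [hbdef]; linarith
    have hk' : |(∫ t in Ioc a b, Ξ t t * ℓ t) - ∫ t in Ioo (0:ℝ) 1, Ξ t t * ℓ t| < ε1 := hk
    have hsubIoo : Ioc a b ⊆ Ioo (0:ℝ) 1 := fun x hx =>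
      ⟨lt_trans ha0 hx.1, lt_of_le_of_lt hx.2 hb1⟩
    have htail : ∫ t in Ioo (0:ℝ) 1 \ Ioc a b, Ξ t t * ℓ t ≤ ε1 := by
      have hdiff := MeasureTheory.integral_diff measurableSet_Ioc hint hsubIoo
      rw [hdiff]
      have := abs_lt.1 hk'
      linarith [this.1]
    -- lower bound for Ξ t t on the middle interval
    set c : ℝ := 1 / ϱ * P a * Q a with hcdef
    have hc0 : 0 < c := by
      rw [hcdef]; exact mul_pos (mul_pos h1ϱ (hPpos a ha0)) (hQpos a ha0)
    have hcle : ∀ t ∈ Ioc a b, c ≤ Ξ t t := by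
      intro t ht
      rw [hΞ' t t, min_self, max_self]
      have ht0 : 0 < t := lt_trans ha0 ht.1
      have h1 : P a ≤ P t := hPmono _ _ ha0.le ht.1.le
      have h2 : Q a ≤ Q (1 - t) := hQmono _ _ ha0.le (by rw [hbdef] at ht; linarith [ht.2])
      calc c = 1 / ϱ * P a * Q a := hcdef
        _ ≤ 1 / ϱ * P t * Q a :=
            mul_le_mul_of_nonneg_right (mul_le_mul_of_nonneg_left h1 h1ϱ.le) (hQnn a ha0.le)
        _ ≤ 1 / ϱ * P t * Q (1 - t) :=
            mul_le_mul_of_nonneg_left h2 (mul_nonneg h1ϱ.le (hPnn t ht0.le))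
    have hsubIoc : Ioc a b ⊆ Ioc (0:ℝ) 1 := Ioc_subset_Ioc ha0.le hb1.le
    have hℓintab : IntegrableOn ℓ (Ioc a b) volume := by
      refine Integrable.mono' (g := fun t => 1/c * (Ξ t t * ℓ t))
        ((hintc.mono_set hsubIoc).const_mul _)
        ((hℓmeas2.mono_measure (Measure.restrict_mono hsubIoc le_rfl)).aestronglyMeasurable) ?_
      rw [ae_restrict_iff' measurableSet_Ioc]
      refine ae_of_all _ fun t ht => ?_
      have htI : t ∈ Ioc (0:ℝ) 1 := hsubIoc ht
      rw [Real.norm_eq_abs, abs_of_nonneg (hℓnn t htI)]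
      have h2 : c * ℓ t ≤ Ξ t t * ℓ t := mul_le_mul_of_nonneg_right (hcle t ht) (hℓnn t htI)
      calc ℓ t = 1/c * (c * ℓ t) := by field_simp
        _ ≤ 1/c * (Ξ t t * ℓ t) := mul_le_mul_of_nonneg_left h2 (by positivity)
    set Kab : ℝ := ∫ t in Ioc a b, ℓ t with hKabdef
    have hKab0 : 0 ≤ Kab := by
      rw [hKabdef]
      exact setIntegral_nonneg measurableSet_Ioc fun t ht => hℓnn t (hsubIoc ht)
    set θ : ℝ := ε / (2 * (L * C * Kab + 1)) with hθdef
    have hLCK0 : 0 ≤ L * C * Kab := mul_nonneg (mul_nonneg hL0 hC) hKab0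
    have hθ0 : 0 < θ := by rw [hθdef]; apply div_pos hε; linarith
    refine ⟨θ, hθ0, ?_⟩
    intro s hs s' hs' hss h hm hCb
    have hi1 := HInt h hm C hCb s hs
    have hi2 := HInt h hm C hCb s' hs'
    rw [← integral_sub hi1 hi2]
    have hcongr : ∫ t in Ioc (0:ℝ) 1, (Ξ s t * ℓ t * h t - Ξ s' t * ℓ t * h t)
        = ∫ t in Ioc (0:ℝ) 1, (Ξ s t - Ξ s' t) * (ℓ t * h t) :=
      integral_congr_ae (ae_of_all _ fun t => by ring)
    rw [hcongr]
    have hGint : IntegrableOn (fun t => (Ξ s t - Ξ s' t) * (ℓ t * h t)) (Ioc (0:ℝ) 1) volume :=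
      (hi1.sub hi2).congr (ae_of_all _ fun t => by simp only [Pi.sub_apply]; ring)
    have hsub1 : Ioc (0:ℝ) a ⊆ Ioc (0:ℝ) 1 := Ioc_subset_Ioc le_rfl (by linarith)
    have hsub3 : Ioc b 1 ⊆ Ioc (0:ℝ) 1 := Ioc_subset_Ioc hb0.le le_rfl
    have hsub0b : Ioc (0:ℝ) b ⊆ Ioc (0:ℝ) 1 := Ioc_subset_Ioc le_rfl hb1.le
    -- split the integral
    have e1 : ∫ t in Ioc (0:ℝ) 1, (Ξ s t - Ξ s' t) * (ℓ t * h t)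
        = ((∫ t in Ioc (0:ℝ) a, (Ξ s t - Ξ s' t) * (ℓ t * h t))
          + ∫ t in Ioc a b, (Ξ s t - Ξ s' t) * (ℓ t * h t))
          + ∫ t in Ioc b 1, (Ξ s t - Ξ s' t) * (ℓ t * h t) := by
      rw [← Ioc_union_Ioc_eq_Ioc (le_of_lt hb0) hb1.le,
        setIntegral_union (Ioc_disjoint_Ioc_of_le le_rfl) measurableSet_Ioc
          (hGint.mono_set hsub0b) (hGint.mono_set hsub3),
        ← Ioc_union_Ioc_eq_Ioc ha0.le hab,
        setIntegral_union (Ioc_disjoint_Ioc_of_le le_rfl) measurableSet_Ioc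
          (hGint.mono_set hsub1) (hGint.mono_set hsubIoc)]
    -- generic tail bound
    have hTail : ∀ S : Set ℝ, MeasurableSet S → S ⊆ Ioc (0:ℝ) 1 →
        S ≤ᵐ[volume] (Ioo (0:ℝ) 1 \ Ioc a b) →
        |∫ t in S, (Ξ s t - Ξ s' t) * (ℓ t * h t)| ≤ C * ε1 := by
      intro S hSm hS1 hSae
      have h1 : |∫ t in S, (Ξ s t - Ξ s' t) * (ℓ t * h t)| ≤ ∫ t in S, C * (Ξ t t * ℓ t) := by
        rw [← Real.norm_eq_abs]
        refine MeasureTheory.norm_integral_le_of_norm_le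
          (((hintc.mono_set hS1)).const_mul C) ?_
        rw [ae_restrict_iff' hSm]
        refine ae_of_all _ fun t ht => ?_
        have htI := hS1 ht
        have htIc := Ioc_subset_Icc_self htI
        rw [Real.norm_eq_abs, abs_mul, abs_mul]
        have hΞd : |Ξ s t - Ξ s' t| ≤ Ξ t t := by
          have g1 := hΞnn s hs t htIc
          have g2 := hΞnn s' hs' t htIc
          have g3 := hΞdiag s hs t htIc
          have g4 := hΞdiag s' hs' t htIc
          rw [abs_le]; constructor <;> linarith
        rw [abs_of_nonneg (hℓnn t htI)]
        calc |Ξ s t - Ξ s' t| * (ℓ t * |h t|) ≤ Ξ t t * (ℓ t * C) := by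
              apply mul_le_mul hΞd (mul_le_mul_of_nonneg_left (hCb t htI) (hℓnn t htI))
                (mul_nonneg (hℓnn t htI) (abs_nonneg _)) (hΞnn t htIc t htIc)
          _ = C * (Ξ t t * ℓ t) := by ring
      have h2 : ∫ t in S, C * (Ξ t t * ℓ t) ≤ C * ε1 := by
        rw [MeasureTheory.integral_const_mul]
        refine mul_le_mul_of_nonneg_left ?_ hC
        refine le_trans ?_ htail
        refine setIntegral_mono_set (hint.mono_set diff_subset) ?_ hSae
        filter_upwards [ae_restrict_mem (measurableSet_Ioo.diff measurableSet_Ioc)] with t ht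
        have htI : t ∈ Ioc (0:ℝ) 1 := Ioo_subset_Ioc_self ht.1
        exact mul_nonneg (hΞnn t (Ioc_subset_Icc_self htI) t (Ioc_subset_Icc_self htI)) (hℓnn t htI)
      exact h1.trans h2
    have hb1' : |∫ t in Ioc (0:ℝ) a, (Ξ s t - Ξ s' t) * (ℓ t * h t)| ≤ C * ε1 := by
      refine hTail _ measurableSet_Ioc hsub1 (HasSubset.Subset.eventuallyLE ?_)
      intro x hx
      refine ⟨⟨hx.1, by linarith [hx.2]⟩, fun hmem => ?_⟩
      exact absurd hmem.1 (not_lt.2 hx.2)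
    have hb3' : |∫ t in Ioc b 1, (Ξ s t - Ξ s' t) * (ℓ t * h t)| ≤ C * ε1 := by
      refine hTail _ measurableSet_Ioc hsub3 ?_
      refine ae_le_set.2 ?_
      refine measure_mono_null (fun x hx => ?_) (MeasureTheory.measure_singleton (1:ℝ))
      obtain ⟨hx1, hx2⟩ := hx
      rcases hx1.2.eq_or_lt with heq | hlt
      · exact mem_singleton_iff.2 heq
      · exact absurd ⟨⟨lt_trans hb0 hx1.1, hlt⟩, fun hmem => absurd hmem.2 (not_le.2 hx1.1)⟩ hx2
    have hb2' : |∫ t in Ioc a b, (Ξ s t - Ξ s' t) * (ℓ t * h t)| ≤ L * C * θ * Kab := by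
      have h1 : |∫ t in Ioc a b, (Ξ s t - Ξ s' t) * (ℓ t * h t)|
          ≤ ∫ t in Ioc a b, (L * C * θ) * ℓ t := by
        rw [← Real.norm_eq_abs]
        refine MeasureTheory.norm_integral_le_of_norm_le (hℓintab.const_mul _) ?_
        rw [ae_restrict_iff' measurableSet_Ioc]
        refine ae_of_all _ fun t ht => ?_
        have htI : t ∈ Ioc (0:ℝ) 1 := hsubIoc ht
        have htIc := Ioc_subset_Icc_self htI
        rw [Real.norm_eq_abs, abs_mul, abs_mul, abs_of_nonneg (hℓnn t htI)]
        have hΞd : |Ξ s t - Ξ s' t| ≤ L * θ :=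
          (hΞlip s hs s' hs' t htIc).trans (mul_le_mul_of_nonneg_left hss hL0)
        calc |Ξ s t - Ξ s' t| * (ℓ t * |h t|) ≤ (L * θ) * (ℓ t * C) := by
              apply mul_le_mul hΞd (mul_le_mul_of_nonneg_left (hCb t htI) (hℓnn t htI))
                (mul_nonneg (hℓnn t htI) (abs_nonneg _)) (mul_nonneg hL0 hθ0.le)
          _ = (L * C * θ) * ℓ t := by ring
      have h2 : ∫ t in Ioc a b, (L * C * θ) * ℓ t = L * C * θ * Kab := by
        rw [MeasureTheory.integral_const_mul, hKabdef]
      rw [h2] at h1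
      exact h1
    -- combine
    rw [e1]
    have habs : |((∫ t in Ioc (0:ℝ) a, (Ξ s t - Ξ s' t) * (ℓ t * h t))
          + ∫ t in Ioc a b, (Ξ s t - Ξ s' t) * (ℓ t * h t))
          + ∫ t in Ioc b 1, (Ξ s t - Ξ s' t) * (ℓ t * h t)|
        ≤ C * ε1 + (L * C * θ * Kab) + C * ε1 := by
      calc |((∫ t in Ioc (0:ℝ) a, (Ξ s t - Ξ s' t) * (ℓ t * h t))
          + ∫ t in Ioc a b, (Ξ s t - Ξ s' t) * (ℓ t * h t))
          + ∫ t in Ioc b 1, (Ξ s t - Ξ s' t) * (ℓ t * h t)|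
          ≤ |(∫ t in Ioc (0:ℝ) a, (Ξ s t - Ξ s' t) * (ℓ t * h t))
          + ∫ t in Ioc a b, (Ξ s t - Ξ s' t) * (ℓ t * h t)|
          + |∫ t in Ioc b 1, (Ξ s t - Ξ s' t) * (ℓ t * h t)| := abs_add_le _ _
        _ ≤ (|∫ t in Ioc (0:ℝ) a, (Ξ s t - Ξ s' t) * (ℓ t * h t)|
          + |∫ t in Ioc a b, (Ξ s t - Ξ s' t) * (ℓ t * h t)|)
          + |∫ t in Ioc b 1, (Ξ s t - Ξ s' t) * (ℓ t * h t)| := by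
            have := abs_add_le (∫ t in Ioc (0:ℝ) a, (Ξ s t - Ξ s' t) * (ℓ t * h t))
              (∫ t in Ioc a b, (Ξ s t - Ξ s' t) * (ℓ t * h t))
            linarith only [this]
        _ ≤ C * ε1 + (L * C * θ * Kab) + C * ε1 := by linarith only [hb1', hb2', hb3']
    refine habs.trans ?_
    have key1 : ε1 * (4 * (C + 1)) = ε := by
      rw [hε1def]; field_simp
    have key2 : θ * (2 * (L * C * Kab + 1)) = ε := by
      rw [hθdef]; field_simp
    have k1 : C * ε1 ≤ ε / 4 := by linarith only [key1, hε1.le]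
    have k2 : L * C * θ * Kab ≤ ε / 2 := by linarith only [key2, hθ0.le]
    linarith only [k1, k2]
  -- continuity in s
  have HCont : ∀ h : ℝ → ℝ, AEStronglyMeasurable h (volume.restrict (Ioc (0:ℝ) 1)) →
      ∀ C : ℝ, 0 ≤ C → (∀ t ∈ Ioc (0:ℝ) 1, |h t| ≤ C) →
      ContinuousOn (fun s => ∫ t in Ioc (0:ℝ) 1, Ξ s t * ℓ t * h t) (Icc (0:ℝ) 1) := by
    intro h hm C hC0 hC
    rw [Metric.continuousOn_iff]
    intro s hs ε hε
    obtain ⟨θ, hθ0, hθ⟩ := HEqc C hC0 (ε/2) (half_pos hε)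
    refine ⟨θ, hθ0, fun s' hs' hd => ?_⟩
    rw [Real.dist_eq] at hd ⊢
    calc |(∫ t in Ioc (0:ℝ) 1, Ξ s' t * ℓ t * h t) - ∫ t in Ioc (0:ℝ) 1, Ξ s t * ℓ t * h t|
        ≤ ε / 2 := hθ s' hs' s hs hd.le h hm hC
      _ < ε := by linarith
  -- rewriting nestedOp as a set integral
  have hrw : ∀ (G : ℝ → ℝ) (gs : List (ℝ → ℝ)) (u : ℝ → ℝ) (s : ℝ),
      nestedOp Ξ ℓ (G :: gs) u s
        = ∫ t in Ioc (0:ℝ) 1, Ξ s t * ℓ t * G (nestedOp Ξ ℓ gs u t) := by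
    intro G gs u s
    show (∫ t in (0:ℝ)..1, Ξ s t * ℓ t * G (nestedOp Ξ ℓ gs u t))
        = ∫ t in Ioc (0:ℝ) 1, Ξ s t * ℓ t * G (nestedOp Ξ ℓ gs u t)
    rw [intervalIntegral.integral_of_le zero_le_one]
  -- the induction over the list of nonlinearities
  have IND : ∀ gs : List (ℝ → ℝ), (∀ G ∈ gs, Continuous G) →
      (∀ u : ℝ → ℝ, ContinuousOn u (Icc (0:ℝ) 1) →
        ContinuousOn (nestedOp Ξ ℓ gs u) (Icc (0:ℝ) 1)) ∧
      (∀ M : ℝ, 0 ≤ M → ∃ B : ℝ, 0 ≤ B ∧ ∀ u : ℝ → ℝ, ContinuousOn u (Icc (0:ℝ) 1) →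
        (∀ s ∈ Icc (0:ℝ) 1, |u s| ≤ M) → ∀ s ∈ Icc (0:ℝ) 1, |nestedOp Ξ ℓ gs u s| ≤ B) ∧
      (∀ M : ℝ, 0 ≤ M → ∀ ε : ℝ, 0 < ε → ∃ η : ℝ, 0 < η ∧ ∀ u v : ℝ → ℝ,
        ContinuousOn u (Icc (0:ℝ) 1) → ContinuousOn v (Icc (0:ℝ) 1) →
        (∀ s ∈ Icc (0:ℝ) 1, |u s| ≤ M) → (∀ s ∈ Icc (0:ℝ) 1, |v s| ≤ M) →
        (∀ s ∈ Icc (0:ℝ) 1, |u s - v s| ≤ η) →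
        ∀ s ∈ Icc (0:ℝ) 1, |nestedOp Ξ ℓ gs u s - nestedOp Ξ ℓ gs v s| ≤ ε) := by
    intro gs
    induction gs with
    | nil =>
      intro _
      refine ⟨fun u hu => ?_, fun M hM => ⟨M, hM, fun u _ hb => ?_⟩,
        fun M _ ε hε => ⟨ε, hε, fun u v _ _ _ _ hd => ?_⟩⟩
      · simpa [nestedOp] using hu
      · simpa [nestedOp] using hb
      · simpa [nestedOp] using hd
    | cons G gs ih =>
      intro hcont
      have hG : Continuous G := hcont G List.mem_cons_self
      have hgs : ∀ G' ∈ gs, Continuous G' := fun G' h => hcont G' (List.mem_cons_of_mem _ h)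
      obtain ⟨ih1, ih2, ih3⟩ := ih hgs
      -- measurability and boundedness of inner composite
      have hwdata : ∀ u : ℝ → ℝ, ContinuousOn u (Icc (0:ℝ) 1) →
          AEStronglyMeasurable (fun t => G (nestedOp Ξ ℓ gs u t)) (volume.restrict (Ioc (0:ℝ) 1))
          ∧ ∃ C : ℝ, 0 ≤ C ∧ ∀ t ∈ Ioc (0:ℝ) 1, |G (nestedOp Ξ ℓ gs u t)| ≤ C := by
        intro u hu
        have hw := ih1 u hu
        have hGw : ContinuousOn (fun t => G (nestedOp Ξ ℓ gs u t)) (Icc (0:ℝ) 1) :=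
          hG.comp_continuousOn hw
        refine ⟨(hGw.mono Ioc_subset_Icc_self).aestronglyMeasurable measurableSet_Ioc, ?_⟩
        obtain ⟨C, hC⟩ := isCompact_Icc.exists_bound_of_continuousOn hGw
        have hC0 : 0 ≤ C := (norm_nonneg _).trans (hC 0 ⟨le_refl _, zero_le_one⟩)
        exact ⟨C, hC0, fun t ht => by
          have := hC t (Ioc_subset_Icc_self ht); rwa [Real.norm_eq_abs] at this⟩
      refine ⟨?_, ?_, ?_⟩
      · -- continuity
        intro u hu
        obtain ⟨hmeas, C, hC0, hCb⟩ := hwdata u hu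
        have : nestedOp Ξ ℓ (G :: gs) u
            = fun s => ∫ t in Ioc (0:ℝ) 1, Ξ s t * ℓ t * G (nestedOp Ξ ℓ gs u t) :=
          funext fun s => hrw G gs u s
        rw [this]
        exact HCont _ hmeas C hC0 hCb
      · -- uniform bound
        intro M hM
        obtain ⟨B, hB0, hB⟩ := ih2 M hM
        obtain ⟨C, hC⟩ := (isCompact_Icc (a := -B) (b := B)).exists_bound_of_continuousOn
          hG.continuousOn
        have hC0 : 0 ≤ C := (norm_nonneg _).trans (hC 0 ⟨neg_nonpos.2 hB0, hB0⟩)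
        refine ⟨C * K0, mul_nonneg hC0 hK0, fun u hu hub s hs => ?_⟩
        obtain ⟨hmeas, _, _, _⟩ := hwdata u hu
        rw [hrw]
        refine HEst _ hmeas C (fun t ht => ?_) s hs
        have hwt := abs_le.1 (hB u hu hub t (Ioc_subset_Icc_self ht))
        have := hC (nestedOp Ξ ℓ gs u t) ⟨hwt.1, hwt.2⟩
        rwa [Real.norm_eq_abs] at this
      · -- uniform continuity in u
        intro M hM ε hε
        obtain ⟨B, hB0, hB⟩ := ih2 M hM
        have hUC := (isCompact_Icc (a := -B) (b := B)).uniformContinuousOn_of_continuous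
          hG.continuousOn
        rw [Metric.uniformContinuousOn_iff] at hUC
        have hε' : 0 < ε / (K0 + 1) := by positivity
        obtain ⟨dG, hdG0, hdG⟩ := hUC (ε / (K0 + 1)) hε'
        obtain ⟨η, hη0, hIH⟩ := ih3 M hM (dG/2) (half_pos hdG0)
        refine ⟨η, hη0, fun u v hu hv hub hvb hd s hs => ?_⟩
        obtain ⟨hmu, Cu, hCu0, hCub⟩ := hwdata u hu
        obtain ⟨hmv, Cv, hCv0, hCvb⟩ := hwdata v hv
        rw [hrw, hrw, ← integral_sub (HInt _ hmu Cu hCub s hs) (HInt _ hmv Cv hCvb s hs)]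
        have hcongr : ∫ t in Ioc (0:ℝ) 1,
            (Ξ s t * ℓ t * G (nestedOp Ξ ℓ gs u t) - Ξ s t * ℓ t * G (nestedOp Ξ ℓ gs v t))
            = ∫ t in Ioc (0:ℝ) 1,
            Ξ s t * ℓ t * (G (nestedOp Ξ ℓ gs u t) - G (nestedOp Ξ ℓ gs v t)) :=
          integral_congr_ae (ae_of_all _ fun t => by ring)
        rw [hcongr]
        have hkey : ∀ t ∈ Ioc (0:ℝ) 1,
            |G (nestedOp Ξ ℓ gs u t) - G (nestedOp Ξ ℓ gs v t)| ≤ ε / (K0 + 1) := by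
          intro t ht
          have htc := Ioc_subset_Icc_self ht
          have hwu := abs_le.1 (hB u hu hub t htc)
          have hwv := abs_le.1 (hB v hv hvb t htc)
          have hclose : dist (nestedOp Ξ ℓ gs u t) (nestedOp Ξ ℓ gs v t) < dG := by
            rw [Real.dist_eq]
            exact lt_of_le_of_lt (hIH u v hu hv hub hvb hd t htc) (by linarith)
          have := hdG _ ⟨hwu.1, hwu.2⟩ _ ⟨hwv.1, hwv.2⟩ hclose
          rw [Real.dist_eq] at this
          exact this.le
        have hest := HEst (fun t => G (nestedOp Ξ ℓ gs u t) - G (nestedOp Ξ ℓ gs v t))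
          (hmu.sub hmv) (ε / (K0 + 1)) hkey s hs
        refine hest.trans ?_
        have hkk : ε / (K0 + 1) * (K0 + 1) = ε := div_mul_cancel₀ _ (by positivity)
        linarith only [hkk, hε'.le]
  -- all the g's are continuous, as lists
  have hgl : ∀ G ∈ List.ofFn g, Continuous G := by
    intro G hGm
    rw [List.mem_ofFn] at hGm
    obtain ⟨i, rfl⟩ := hGm
    exact hgcont i
  constructor
  · -- continuity of the operator
    intro u₁ hu ε hε
    obtain ⟨hu1, -, -⟩ := hu
    obtain ⟨M₀, hM₀⟩ := isCompact_Icc.exists_bound_of_continuousOn hu1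
    set M : ℝ := max M₀ 0 + 1 with hMdef
    have hmax0 : (0:ℝ) ≤ max M₀ 0 := le_max_right _ _
    have hM0 : 0 ≤ M := by rw [hMdef]; linarith
    obtain ⟨η₀, hη₀0, hη₀⟩ := (IND (List.ofFn g) hgl).2.2 M hM0 ε hε
    refine ⟨min η₀ 1, lt_min hη₀0 one_pos, ?_⟩
    intro v₁ hv hdv s hs
    obtain ⟨hv1, -, -⟩ := hv
    have hub : ∀ s ∈ Icc (0:ℝ) 1, |u₁ s| ≤ M := by
      intro s hs
      have h1 := hM₀ s hs
      rw [Real.norm_eq_abs] at h1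
      have h2 := le_max_left M₀ 0
      rw [hMdef]; linarith
    have hvb : ∀ s ∈ Icc (0:ℝ) 1, |v₁ s| ≤ M := by
      intro s hs
      have h1 := hM₀ s hs
      rw [Real.norm_eq_abs] at h1
      have h2 := (hdv s hs).trans (min_le_right _ _)
      have h3 : |v₁ s| ≤ |u₁ s| + |u₁ s - v₁ s| := by
        calc |v₁ s| = |u₁ s - (u₁ s - v₁ s)| := by congr 1; ring
          _ ≤ |u₁ s| + |u₁ s - v₁ s| := abs_sub _ _
      have h4 := le_max_left M₀ 0
      rw [hMdef]; linarith
    have hd' : ∀ s ∈ Icc (0:ℝ) 1, |u₁ s - v₁ s| ≤ η₀ :=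
      fun s hs => (hdv s hs).trans (min_le_left _ _)
    exact hη₀ u₁ v₁ hu1 hv1 hub hvb hd' s hs
  · -- compactness
    intro M
    haveI : CompactSpace ↥(Icc (0:ℝ) 1) :=
      isCompact_iff_compactSpace.mp (isCompact_Icc : IsCompact (Icc (0:ℝ) 1))
    obtain ⟨n', rfl⟩ := Nat.exists_eq_succ_of_ne_zero (NeZero.ne n)
    set M' : ℝ := max M 0 with hM'def
    have hM'0 : 0 ≤ M' := le_max_right _ _
    obtain ⟨R, hR0, hRb⟩ := (IND (List.ofFn g) hgl).2.1 M' hM'0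
    set gs' : List (ℝ → ℝ) := List.ofFn (fun i : Fin n' => g i.succ) with hgs'def
    have hlist : List.ofFn g = g 0 :: gs' := List.ofFn_succ
    have hgs'c : ∀ G ∈ gs', Continuous G := by
      rw [hgs'def]
      intro G hGm
      rw [List.mem_ofFn] at hGm
      obtain ⟨i, rfl⟩ := hGm
      exact hgcont _
    obtain ⟨B, hB0, hBb⟩ := (IND gs' hgs'c).2.1 M' hM'0
    obtain ⟨CG, hCG⟩ := (isCompact_Icc (a := -B) (b := B)).exists_bound_of_continuousOn
      (hgcont 0).continuousOn
    have hCG0 : 0 ≤ CG := (norm_nonneg _).trans (hCG 0 ⟨neg_nonpos.2 hB0, hB0⟩)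
    set e := ContinuousMap.isometryEquivBoundedOfCompact ↥(Icc (0:ℝ) 1) ℝ with hedef
    set A : Set C(↥(Set.Icc (0:ℝ) 1), ℝ) := { f : C(↥(Set.Icc (0:ℝ) 1), ℝ) |
        ∃ u₁ : ℝ → ℝ,
          (ContinuousOn u₁ (Set.Icc (0:ℝ) 1) ∧
      (∀ s ∈ Set.Icc (0:ℝ) 1, 0 ≤ u₁ s) ∧
      (∀ s ∈ Set.Icc (0:ℝ) 1, ℘ * sSup ((fun t => |u₁ t|) '' Set.Icc (0:ℝ) 1) ≤ u₁ s)) ∧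
          (∀ s ∈ Set.Icc (0:ℝ) 1, |u₁ s| ≤ M) ∧
          ∀ s : ↥(Set.Icc (0:ℝ) 1), f s = nestedOp Ξ ℓ (List.ofFn g) u₁ (s : ℝ) } with hAdef
    have key : IsCompact (closure (e '' A)) := by
      apply BoundedContinuousFunction.arzela_ascoli (Icc (-R) R) isCompact_Icc
      · -- range condition
        intro f x hf
        obtain ⟨u, hu, rfl⟩ := hf
        obtain ⟨u₁, hu₁, hub, hfeq⟩ := hu
        have happ : (e u) x = u x := rfl
        rw [happ, hfeq x]
        have hub' : ∀ s ∈ Icc (0:ℝ) 1, |u₁ s| ≤ M' :=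
          fun s hs => (hub s hs).trans (le_max_left _ _)
        have := hRb u₁ hu₁.1 hub' (↑x) x.2
        exact ⟨(abs_le.1 this).1, (abs_le.1 this).2⟩
      · -- equicontinuity
        intro x₀
        rw [Metric.equicontinuousAt_iff]
        intro ε hε
        obtain ⟨θ, hθ0, hθ⟩ := HEqc CG hCG0 (ε/2) (half_pos hε)
        refine ⟨θ, hθ0, fun x hx i => ?_⟩
        obtain ⟨u, hu, hei⟩ := i.2
        obtain ⟨u₁, hu₁, hub, hfeq⟩ := hu
        have happ : ∀ y : ↥(Icc (0:ℝ) 1),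
            (↑i : BoundedContinuousFunction ↥(Icc (0:ℝ) 1) ℝ) y = nestedOp Ξ ℓ (List.ofFn g) u₁ (↑y : ℝ) := by
          intro y
          rw [← hei]
          have h0 : (e u) y = u y := rfl
          rw [h0, hfeq y]
        have hw := (IND gs' hgs'c).1 u₁ hu₁.1
        have hGw : ContinuousOn (fun t => g 0 (nestedOp Ξ ℓ gs' u₁ t)) (Icc (0:ℝ) 1) :=
          (hgcont 0).comp_continuousOn hw
        have hmeas : AEStronglyMeasurable (fun t => g 0 (nestedOp Ξ ℓ gs' u₁ t))
            (volume.restrict (Ioc (0:ℝ) 1)) :=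
          (hGw.mono Ioc_subset_Icc_self).aestronglyMeasurable measurableSet_Ioc
        have hub' : ∀ s ∈ Icc (0:ℝ) 1, |u₁ s| ≤ M' :=
          fun s hs => (hub s hs).trans (le_max_left _ _)
        have hbd : ∀ t ∈ Ioc (0:ℝ) 1, |g 0 (nestedOp Ξ ℓ gs' u₁ t)| ≤ CG := by
          intro t ht
          have hwt := abs_le.1 (hBb u₁ hu₁.1 hub' t (Ioc_subset_Icc_self ht))
          have := hCG _ ⟨hwt.1, hwt.2⟩
          rwa [Real.norm_eq_abs] at this
        have hrep : ∀ y : ↥(Icc (0:ℝ) 1), (↑i : BoundedContinuousFunction ↥(Icc (0:ℝ) 1) ℝ) y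
            = ∫ t in Ioc (0:ℝ) 1, Ξ (↑y : ℝ) t * ℓ t * g 0 (nestedOp Ξ ℓ gs' u₁ t) := by
          intro y
          rw [happ y, hlist, hrw]
        have hxx : |(↑x₀ : ℝ) - ↑x| ≤ θ := by
          have h1 : dist x₀ x < θ := by rwa [dist_comm] at hx
          rw [Subtype.dist_eq, Real.dist_eq] at h1
          exact h1.le
        rw [Real.dist_eq, hrep x₀, hrep x]
        calc |(∫ t in Ioc (0:ℝ) 1, Ξ ↑x₀ t * ℓ t * g 0 (nestedOp Ξ ℓ gs' u₁ t))
            - ∫ t in Ioc (0:ℝ) 1, Ξ ↑x t * ℓ t * g 0 (nestedOp Ξ ℓ gs' u₁ t)|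
            ≤ ε/2 := hθ (↑x₀) x₀.2 (↑x) x.2 hxx _ hmeas hbd
          _ < ε := by linarith
    have hcoe : ⇑(e.toHomeomorph) = ⇑e := rfl
    have himg : e.toHomeomorph '' (closure A) = closure (e.toHomeomorph '' A) :=
      (e.toHomeomorph).image_closure A
    rw [hcoe] at himg
    have hc2 : IsCompact (⇑e '' closure A) := by rw [himg]; exact key
    have hiff := e.toHomeomorph.isCompact_image (s := closure A)
    rw [hcoe] at hiff
    exact hiff.mp hc2
end

section
/- (Rus's fixed point theorem.) Let X be a nonempty set equipped with two metrics d and ρ such that (X, d) is a complete metric space. Let Λ : X → X be continuous with respect to d. Suppose there exists α₁ > 0 such that d(Λx, Λy) ≤ α₁·ρ(x, y) for all x, y ∈ X, and there exists α₂ with 0 < α₂ < 1 such that ρ(Λx, Λy) ≤ α₂·ρ(x, y) for all x, y ∈ X. Then there is a unique x* ∈ X with Λx* = x*. -/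
open MeasureTheory Set Real

theorem stmt16
    {X : Type*} [Nonempty X]
    (d ρ : X → X → ℝ)
    (hd0 : ∀ x y, d x y = 0 ↔ x = y)
    (hdsymm : ∀ x y, d x y = d y x)
    (hdtri : ∀ x y z, d x z ≤ d x y + d y z)
    (hρ0 : ∀ x y, ρ x y = 0 ↔ x = y)
    (hρsymm : ∀ x y, ρ x y = ρ y x)
    (hρtri : ∀ x y z, ρ x z ≤ ρ x y + ρ y z)
    (hcomplete : ∀ x : ℕ → X,
      (∀ ε > (0:ℝ), ∃ M : ℕ, ∀ i ≥ M, ∀ j ≥ M, d (x i) (x j) < ε) →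
      ∃ l : X, ∀ ε > (0:ℝ), ∃ M : ℕ, ∀ i ≥ M, d (x i) l < ε)
    (Λ : X → X)
    (hΛcont : ∀ x : X, ∀ ε > (0:ℝ), ∃ η > (0:ℝ), ∀ y : X, d x y < η → d (Λ x) (Λ y) < ε)
    (α₁ : ℝ) (hα₁ : 0 < α₁)
    (h1 : ∀ x y : X, d (Λ x) (Λ y) ≤ α₁ * ρ x y)
    (α₂ : ℝ) (hα₂0 : 0 < α₂) (hα₂1 : α₂ < 1)
    (h2 : ∀ x y : X, ρ (Λ x) (Λ y) ≤ α₂ * ρ x y) :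
    ∃! x : X, Λ x = x := by
  classical
  have dnn : ∀ x y, 0 ≤ d x y := by
    intro x y
    have h := hdtri x y x
    have hxx : d x x = 0 := (hd0 x x).mpr rfl
    have hs := hdsymm y x
    nlinarith
  have ρnn : ∀ x y, 0 ≤ ρ x y := by
    intro x y
    have h := hρtri x y x
    have hxx : ρ x x = 0 := (hρ0 x x).mpr rfl
    have hs := hρsymm y x
    nlinarith
  set x0 : X := Classical.arbitrary X with hx0
  set seq : ℕ → X := fun n => Λ^[n] x0 with hseqdef
  have hseq : ∀ n, seq (n + 1) = Λ (seq n) := by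
    intro n
    simp only [hseqdef]
    exact Function.iterate_succ_apply' Λ n x0
  set C : ℝ := ρ (seq 1) (seq 0) with hCdef
  have hC : 0 ≤ C := ρnn _ _
  have hρn : ∀ n, ρ (seq (n + 1)) (seq n) ≤ α₂ ^ n * C := by
    intro n
    induction n with
    | zero => simp [hCdef]
    | succ n ih =>
      have h := h2 (seq (n + 1)) (seq n)
      rw [← hseq (n + 1), ← hseq n] at h
      have hp : (0:ℝ) ≤ α₂ ^ n * C := mul_nonneg (pow_nonneg hα₂0.le n) hC
      calc ρ (seq (n+1+1)) (seq (n+1)) ≤ α₂ * ρ (seq (n+1)) (seq n) := h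
        _ ≤ α₂ * (α₂ ^ n * C) := by nlinarith
        _ = α₂ ^ (n+1) * C := by ring
  have hdn : ∀ n, d (seq (n + 2)) (seq (n + 1)) ≤ α₁ * (α₂ ^ n * C) := by
    intro n
    have h := h1 (seq (n + 1)) (seq n)
    rw [← hseq (n + 1), ← hseq n] at h
    calc d (seq (n+2)) (seq (n+1)) ≤ α₁ * ρ (seq (n+1)) (seq n) := h
      _ ≤ α₁ * (α₂ ^ n * C) := by nlinarith [hρn n]
  set K : ℝ := α₁ * C / (1 - α₂) with hKdef
  have h1α : (0:ℝ) < 1 - α₂ := by linarith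
  have hK : 0 ≤ K := div_nonneg (mul_nonneg hα₁.le hC) h1α.le
  have hKeq : K * (1 - α₂) = α₁ * C := by rw [hKdef, div_mul_cancel₀ _ h1α.ne']
  have hseg : ∀ m n, d (seq (m + 1)) (seq (m + 1 + n)) ≤ K * (α₂ ^ m - α₂ ^ (m + n)) := by
    intro m n
    induction n with
    | zero => simp [(hd0 _ _).mpr rfl]
    | succ n ih =>
      have htri := hdtri (seq (m + 1)) (seq (m + 1 + n)) (seq (m + 1 + n + 1))
      have hstep : d (seq (m + 1 + n)) (seq (m + 1 + n + 1)) ≤ α₁ * (α₂ ^ (m + n) * C) := by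
        rw [hdsymm]
        have := hdn (m + n)
        convert this using 3 <;> omega
      have hpow : α₂ ^ (m + n + 1) = α₂ ^ (m + n) * α₂ := pow_succ _ _
      have hle : d (seq (m+1)) (seq (m+1+(n+1))) ≤
          K * (α₂ ^ m - α₂ ^ (m + n)) + α₁ * (α₂ ^ (m + n) * C) := by
        have : m + 1 + (n + 1) = m + 1 + n + 1 := by omega
        rw [this]
        linarith
      have hkey : K * (α₂ ^ m - α₂ ^ (m + n)) + α₁ * (α₂ ^ (m + n) * C)
          = K * (α₂ ^ m - α₂ ^ (m + (n + 1))) := by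
        have : m + (n + 1) = m + n + 1 := by omega
        rw [this, hpow]
        linear_combination (-(α₂ ^ (m + n))) * hKeq
      linarith [hle, hkey.le]
  have hseg' : ∀ m n, d (seq (m + 1)) (seq (m + 1 + n)) ≤ K * α₂ ^ m := by
    intro m n
    have := hseg m n
    have hp : (0:ℝ) ≤ α₂ ^ (m + n) := pow_nonneg hα₂0.le _
    nlinarith
  -- Cauchy
  have hcauchy : ∀ ε > (0:ℝ), ∃ M : ℕ, ∀ i ≥ M, ∀ j ≥ M, d (seq i) (seq j) < ε := by
    intro ε hε
    have hN : ∃ N : ℕ, K * α₂ ^ N < ε := by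
      rcases eq_or_lt_of_le hK with h | h
      · exact ⟨0, by rw [← h]; simpa using hε⟩
      · obtain ⟨N, hN⟩ := exists_pow_lt_of_lt_one (div_pos hε h) hα₂1
        exact ⟨N, by rw [mul_comm]; exact (lt_div_iff₀ h).mp hN⟩
    obtain ⟨N, hN⟩ := hN
    refine ⟨N + 1, ?_⟩
    have key : ∀ i j, N + 1 ≤ i → i ≤ j → d (seq i) (seq j) < ε := by
      intro i j hi hij
      obtain ⟨m, rfl⟩ : ∃ m, i = m + 1 := ⟨i - 1, by omega⟩
      obtain ⟨n, rfl⟩ : ∃ n, j = m + 1 + n := ⟨j - (m + 1), by omega⟩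
      have h1 := hseg' m n
      have h2 : α₂ ^ m ≤ α₂ ^ N := pow_le_pow_of_le_one hα₂0.le hα₂1.le (by omega)
      nlinarith
    intro i hi j hj
    rcases le_total i j with h | h
    · exact key i j hi h
    · rw [hdsymm]; exact key j i hj h
  obtain ⟨l, hl⟩ := hcomplete seq hcauchy
  -- l is a fixed point
  have hfix : Λ l = l := by
    have key : ∀ ε > (0:ℝ), d (Λ l) l < ε := by
      intro ε hε
      obtain ⟨η, hη, hηc⟩ := hΛcont l (ε / 2) (by linarith)
      obtain ⟨M, hM⟩ := hl (min η (ε / 2)) (by positivity)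
      have hM1 := hM M le_rfl
      have hM2 := hM (M + 1) (by omega)
      have hc : d (Λ l) (Λ (seq M)) < ε / 2 := by
        apply hηc
        rw [hdsymm]
        exact lt_of_lt_of_le hM1 (min_le_left _ _)
      rw [← hseq M] at hc
      have htri := hdtri (Λ l) (seq (M + 1)) l
      rw [hdsymm (Λ l) (seq (M+1))] at htri
      have : d (seq (M + 1)) l < ε / 2 := lt_of_lt_of_le hM2 (min_le_right _ _)
      rw [hdsymm (seq (M+1)) (Λ l)] at htri
      linarith
    have h0 : d (Λ l) l ≤ 0 := by
      by_contra h
      push_neg at h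
      exact lt_irrefl _ (key _ h)
    exact (hd0 _ _).mp (le_antisymm h0 (dnn _ _))
  refine ⟨l, hfix, ?_⟩
  intro y hy
  have h := h2 y l
  rw [hy, hfix] at h
  have h0 : ρ y l ≤ 0 := by nlinarith [ρnn y l]
  exact (hρ0 y l).mp (le_antisymm h0 (ρnn y l))
end
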